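/- arXiv:2203.02566 — 3 statements merged into one kernel-verified Lean document; each statement's English description precedes it below -/
import Mathlib

section
/- Every nontrivial finite subgroup of Γ = ℤⁿ ⋊_ρ ℤ/p is cyclic of order p. -/
/-- The multiplicative group structure on `AddAut A` that Mathlib provided in the older version
(now Mathlib gives `AddAut A` an additive group structure instead). -/
instance addAutOldGroup {A : Type*} [Add A] : Group (AddAut A) where
  mul g h := AddEquiv.trans h g
  one := AddEquiv.refl _
  inv := AddEquiv.symm
  mul_assoc _ _ _ := rfl
  one_mul _ := rfl
  mul_one _ := rfl
  inv_mul_cancel := AddEquiv.self_trans_symm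

/-- The monoid homomorphism sending an additive automorphism of `A` to the corresponding
multiplicative automorphism of `Multiplicative A`. -/
def addAutToMulAut {A : Type*} [AddGroup A] : AddAut A →* MulAut (Multiplicative A) where
  toFun e := AddEquiv.toMultiplicative e
  map_one' := rfl
  map_mul' _ _ := rfl

/-- The semidirect product `Γ = ℤⁿ ⋊_ρ ℤ/p` (written multiplicatively), with multiplication
`(x,g)·(x',g') = (x + ρ(g)x', g+g')`. -/
abbrev Gam (p n : ℕ) (ρ : Multiplicative (ZMod p) →* AddAut (Fin n → ℤ)) : Type :=
  (Multiplicative (Fin n → ℤ)) ⋊[addAutToMulAut.comp ρ] (Multiplicative (ZMod p))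

/-- every nontrivial finite subgroup of `Γ = ℤⁿ ⋊_ρ ℤ/p` is cyclic of order `p`. -/
theorem stmt0 (p n : ℕ) [Fact p.Prime]
    (ρ : Multiplicative (ZMod p) →* AddAut (Fin n → ℤ))
    (H : Subgroup (Gam p n ρ)) (hne : H ≠ ⊥) (hfin : Finite H) :
    IsCyclic H ∧ Nat.card H = p := by
  have hp := Fact.out (p := p.Prime)
  -- the composite H → Γ → ZMod p
  set f : H →* Multiplicative (ZMod p) :=
    SemidirectProduct.rightHom.comp H.subtype with hf
  have hinj : Function.Injective f := by
    rw [← MonoidHom.ker_eq_bot_iff]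
    ext h
    simp only [MonoidHom.mem_ker, Subgroup.mem_bot]
    constructor
    · intro hker
      have hright : (h : Gam p n ρ).right = 1 := hker
      have hinl : (h : Gam p n ρ) = SemidirectProduct.inl (h : Gam p n ρ).left := by
        ext <;> simp [hright]
      -- h has finite order since H is finite
      have hfo : IsOfFinOrder (h : H) := isOfFinOrder_of_finite _
      obtain ⟨k, hk, hke⟩ := hfo.exists_pow_eq_one
      have hk1 : ((h : Gam p n ρ)) ^ k = 1 := by
        have := congrArg (H.subtype) hke
        simpa using this
      rw [hinl, ← map_pow] at hk1
      have hleft : ((h : Gam p n ρ).left) ^ k = 1 := by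
        have h2 : (SemidirectProduct.inl (G := Multiplicative (ZMod p)) (((h : Gam p n ρ).left) ^ k) : Gam p n ρ)
            = SemidirectProduct.inl (1 : Multiplicative (Fin n → ℤ)) := by
          simpa using hk1
        exact SemidirectProduct.inl_injective h2
      -- torsion-free: k • x = 0 in Fin n → ℤ implies x = 0
      have hx : (k : ℤ) • (Multiplicative.toAdd (h : Gam p n ρ).left) = 0 := by
        have := congrArg Multiplicative.toAdd hleft
        simpa [toAdd_pow] using this
      have hx0 : Multiplicative.toAdd (h : Gam p n ρ).left = 0 := by
        have hkz : (k : ℤ) ≠ 0 := by exact_mod_cast hk.ne'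
        exact (smul_eq_zero.mp hx).resolve_left hkz
      have : (h : Gam p n ρ) = 1 := by
        rw [hinl]
        have : (h : Gam p n ρ).left = 1 := by
          simpa using congrArg Multiplicative.ofAdd hx0
        simp [this]
      exact Subtype.ext this
    · intro h1; simp [h1, hf]
  have hcard : Nat.card H ∣ p := by
    have hdvd : Nat.card H ∣ Nat.card (Multiplicative (ZMod p)) :=
      Subgroup.card_dvd_of_injective f hinj
    simpa [Nat.card_eq_fintype_card] using hdvd
  have hne1 : Nat.card H ≠ 1 := by
    intro h1
    exact hne (Subgroup.eq_bot_of_card_eq H h1)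
  have hcp : Nat.card H = p := ((Nat.Prime.eq_one_or_self_of_dvd hp _ hcard).resolve_left hne1)
  exact ⟨isCyclic_of_prime_card hcp, hcp⟩
end

section
/- Let p be a prime and ζ a primitive p-th root of unity. Let ℤ/p act on ℤ[ζ] by a fixed generator acting as multiplication by ζ. Then the first group cohomology H¹(ℤ/p; ℤ[ζ]) is isomorphic to ℤ/p. -/
/-- The homomorphism `ℤ/p → G` sending a fixed additive generator to `g`, where `g ^ p = 1`. -/
noncomputable def cycHom {G : Type*} [Group G] (p : ℕ) (g : G) (hg : g ^ p = 1) :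
    Multiplicative (ZMod p) →* G :=
  AddMonoidHom.toMultiplicativeLeft
    (ZMod.lift p ⟨MonoidHom.toAdditiveRight (zpowersHom G g), by
      show Additive.ofMul ((zpowersHom G g) (Multiplicative.ofAdd (p : ℤ))) = 0
      have h1 : (zpowersHom G g) (Multiplicative.ofAdd (p : ℤ)) = 1 := by
        simp [zpowersHom_apply, hg]
      rw [h1]; rfl⟩)

/-- The cyclotomic field `ℚ(ζ_p)`. -/
abbrev Kcyc (p : ℕ) [hp : Fact p.Prime] : Type := CyclotomicField p ℚ

/-- The ring of integers `ℤ[ζ_p]` of the cyclotomic field `ℚ(ζ_p)`. -/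
abbrev Rcyc (p : ℕ) [Fact p.Prime] := NumberField.RingOfIntegers (Kcyc p)

/-- The monoid homomorphism from additive automorphisms of `M` to `ℤ`-linear endomorphisms. -/
def autToEnd {M : Type*} [AddCommGroup M] : Multiplicative (AddAut M) →* Module.End ℤ M where
  toFun e := (Multiplicative.toAdd e).toAddMonoidHom.toIntLinearMap
  map_one' := rfl
  map_mul' _ _ := rfl

/-- The representation of `ℤ/p` on `ℤ[ζ]`, with the fixed generator acting by multiplication
by `ζ`. -/
noncomputable def zetaRepSelf (p : ℕ) [hp : Fact p.Prime] (ζ : Rcyc p)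
    (hζ : IsPrimitiveRoot ζ p) :
    Representation ℤ (Multiplicative (ZMod p)) (Rcyc p) :=
  autToEnd.comp (cycHom p
    ((DistribMulAction.toAddAut ((Rcyc p)ˣ) (Rcyc p)) (hζ.isUnit hp.out.ne_zero).unit)
    (by
      rw [← map_pow]
      have hu : (hζ.isUnit hp.out.ne_zero).unit ^ p = 1 := Units.ext (by simp [hζ.pow_eq_one])
      rw [hu, map_one]))

lemma cycHom_intCast {G : Type*} [Group G] (p : ℕ) (g : G) (hg : g ^ p = 1) (n : ℤ) :
    cycHom p g hg (Multiplicative.ofAdd ((n : ZMod p))) = g ^ n := by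
  simp [cycHom, ZMod.lift_coe]

lemma zetaRepSelf_one_apply (p : ℕ) [hp : Fact p.Prime] (ζ : Rcyc p)
    (hζ : IsPrimitiveRoot ζ p) (x : Rcyc p) :
    zetaRepSelf p ζ hζ (Multiplicative.ofAdd (1 : ZMod p)) x = ζ * x := by
  have h1 : (1 : ZMod p) = ((1 : ℤ) : ZMod p) := by push_cast; rfl
  rw [zetaRepSelf, MonoidHom.comp_apply, h1, cycHom_intCast]
  simp [autToEnd]
  rfl

lemma zetaRepSelf_natCast_apply (p : ℕ) [hp : Fact p.Prime] (ζ : Rcyc p)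
    (hζ : IsPrimitiveRoot ζ p) (n : ℕ) (x : Rcyc p) :
    zetaRepSelf p ζ hζ (Multiplicative.ofAdd ((n : ZMod p))) x = ζ ^ n * x := by
  induction n generalizing x with
  | zero => simp
  | succ n ih =>
    have h1 : ((n + 1 : ℕ) : ZMod p) = (n : ZMod p) + 1 := by push_cast; ring
    rw [h1, ofAdd_add, map_mul, Module.End.mul_apply, zetaRepSelf_one_apply, ih]
    ring


open Finset in
lemma geomS_add {R : Type*} [CommRing R] (ζ : R) (a b : ℕ) :
    ∑ i ∈ range (a + b), ζ ^ i
      = (∑ i ∈ range a, ζ ^ i) + ζ ^ a * ∑ i ∈ range b, ζ ^ i := by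
  rw [Finset.sum_range_add]
  simp [pow_add, Finset.mul_sum]

open Finset in
lemma geomS_mod {R : Type*} [CommRing R] {ζ : R} {p : ℕ}
    (hSp : ∑ i ∈ range p, ζ ^ i = 0) (n : ℕ) :
    ∑ i ∈ range n, ζ ^ i = ∑ i ∈ range (n % p), ζ ^ i := by
  have hper : ∀ (k m : ℕ), ∑ i ∈ range (m + p * k), ζ ^ i = ∑ i ∈ range m, ζ ^ i := by
    intro k
    induction k with
    | zero => simp
    | succ k ih =>
      intro m
      have h : m + p * (k + 1) = (m + p * k) + p := by ring
      rw [h, geomS_add, hSp, ih]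
      ring
  conv_lhs => rw [← Nat.mod_add_div n p]
  exact hper _ _


section Stmt13
open groupCohomology Finset Polynomial CategoryTheory
set_option maxHeartbeats 1000000
set_option synthInstance.maxHeartbeats 400000

/-- the first group cohomology `H¹(ℤ/p; ℤ[ζ])`, with a generator of `ℤ/p` acting
on `ℤ[ζ]` by multiplication by the primitive `p`-th root of unity `ζ`, is isomorphic
to `ℤ/p`. -/
theorem stmt13 (p : ℕ) [hp : Fact p.Prime] (ζ : Rcyc p) (hζ : IsPrimitiveRoot ζ p) :
    Nonempty ((groupCohomology (Rep.of (zetaRepSelf p ζ hζ)) 1 : ModuleCat ℤ) ≃+ ZMod p) := by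
  classical
  haveI : NeZero p := ⟨hp.out.pos.ne'⟩
  set G := Multiplicative (ZMod p)
  set A : Rep ℤ G := Rep.of (zetaRepSelf p ζ hζ) with hA
  set g₀ : G := Multiplicative.ofAdd (1 : ZMod p) with hg₀
  set I : Ideal (Rcyc p) := Ideal.span {ζ - 1} with hI
  have hone : 1 < p := hp.out.one_lt
  let fv : cocycles₁ A → G → Rcyc p := fun f g => f g
  let ract : G → Rcyc p → Rcyc p := fun g x => A.ρ g x
  have hρn : ∀ (n : ℕ) (x : Rcyc p), ract (Multiplicative.ofAdd ((n : ZMod p))) x = ζ ^ n * x :=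
    fun n x => zetaRepSelf_natCast_apply p ζ hζ n x
  have hρ1 : ∀ x : Rcyc p, ract g₀ x = ζ * x := fun x => zetaRepSelf_one_apply p ζ hζ x
  have hg : ∀ g : G, Multiplicative.ofAdd (((Multiplicative.toAdd g).val : ℕ) : ZMod p) = g :=
    fun g => congrArg Multiplicative.ofAdd (ZMod.natCast_rightInverse (Multiplicative.toAdd g))
  have hρ : ∀ (g : G) (x : Rcyc p),
      ract g x = ζ ^ (Multiplicative.toAdd g).val * x := by
    intro g x
    conv_lhs => rw [← hg g]
    exact hρn _ x
  have hSp : ∑ i ∈ range p, ζ ^ i = 0 := hζ.geom_sum_eq_zero hone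
  -- cocycles are determined by their value at g₀
  have hcocn : ∀ (f : cocycles₁ A) (n : ℕ),
      fv f (Multiplicative.ofAdd ((n : ZMod p)))
        = (∑ i ∈ range n, ζ ^ i) * fv f g₀ := by
    intro f n
    induction n with
    | zero =>
      have h0 : fv f 1 = 0 := cocycles₁_map_one f
      simpa using h0
    | succ n ih =>
      have h1 : ((n + 1 : ℕ) : ZMod p) = 1 + (n : ZMod p) := by push_cast; ring
      have h2 : fv f (g₀ * Multiplicative.ofAdd ((n : ZMod p)))
          = ract g₀ (fv f (Multiplicative.ofAdd ((n : ZMod p)))) + fv f g₀ :=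
        (mem_cocycles₁_iff _).1 f.2 g₀ (Multiplicative.ofAdd ((n : ZMod p)))
      rw [h1, ofAdd_add]
      show fv f (g₀ * Multiplicative.ofAdd ((n : ZMod p))) = _
      rw [h2, ih, hρ1, geom_sum_succ]
      ring
  have hcoc : ∀ (f : cocycles₁ A) (g : G),
      fv f g = (∑ i ∈ range (Multiplicative.toAdd g).val, ζ ^ i) * fv f g₀ := by
    intro f g
    conv_lhs => rw [← hg g]
    exact hcocn f _
  -- the evaluation map
  let ev : cocycles₁ A →ₗ[ℤ] Rcyc p :=
    { toFun := fun f => fv f g₀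
      map_add' := fun f g => rfl
      map_smul' := fun c f => rfl }
  have hevsurj : Function.Surjective ev := by
    intro m
    have hmem : (fun g : G => (∑ i ∈ range (Multiplicative.toAdd g).val, ζ ^ i) * m)
        ∈ cocycles₁ A := by
      refine (mem_cocycles₁_iff _).2 fun g h => ?_
      have hval : (Multiplicative.toAdd (g * h)).val
          = ((Multiplicative.toAdd g).val + (Multiplicative.toAdd h).val) % p :=
        ZMod.val_add _ _
      show (∑ i ∈ range (Multiplicative.toAdd (g*h)).val, ζ ^ i) * m
        = ract g ((∑ i ∈ range (Multiplicative.toAdd h).val, ζ ^ i) * m)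
          + (∑ i ∈ range (Multiplicative.toAdd g).val, ζ ^ i) * m
      rw [hρ, hval, ← geomS_mod hSp, geomS_add]
      ring
    refine ⟨⟨_, hmem⟩, ?_⟩
    show (∑ i ∈ range (Multiplicative.toAdd g₀).val, ζ ^ i) * m = m
    have h1 : (Multiplicative.toAdd g₀).val = 1 := ZMod.val_one p
    rw [h1]
    simp
  -- the map to the quotient
  let q : Rcyc p →+* Rcyc p ⧸ I := Ideal.Quotient.mk I
  let φ : cocycles₁ A →ₗ[ℤ] Rcyc p ⧸ I := q.toAddMonoidHom.toIntLinearMap.comp ev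
  have hφsurj : Function.Surjective φ :=
    (Ideal.Quotient.mk_surjective (I := I)).comp hevsurj
  have hker : LinearMap.ker φ = (LinearMap.range (shortComplexH1 A).moduleCatToCycles : Submodule ℤ (cocycles₁ A)) := by
    ext f
    rw [LinearMap.mem_ker]
    constructor
    · intro hf
      have h0 : ev f ∈ I := Ideal.Quotient.eq_zero_iff_mem.1 hf
      obtain ⟨a, ha⟩ := Ideal.mem_span_singleton'.1 h0
      refine LinearMap.mem_range.2 ⟨a, ?_⟩
      apply Subtype.ext
      funext g
      show ract g a - a = fv f g
      rw [hρ, hcoc f g]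
      have hev : fv f g₀ = ev f := rfl
      rw [hev, ← ha]
      have hgs := geom_sum_mul ζ (Multiplicative.toAdd g).val
      linear_combination (-a) * hgs
    · intro hf
      obtain ⟨x, hx⟩ := LinearMap.mem_range.1 hf
      let x' : Rcyc p := x
      have hx' : ∀ g : G, ract g x' - x' = fv f g := fun g => congrFun (congrArg Subtype.val hx) g
      have hx0 : ev f = (ζ - 1) * x' := by
        show fv f g₀ = (ζ - 1) * x'
        rw [← hx' g₀, hρ1]
        ring
      show q (ev f) = 0
      rw [hx0]
      exact Ideal.Quotient.eq_zero_iff_mem.2 (Ideal.mul_mem_right _ _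
        (Ideal.subset_span (Set.mem_singleton _)))
  -- H1 ≃ R ⧸ I
  have equiv1 : (LinearMap.ker (shortComplexH1 A).g.hom ⧸ LinearMap.range (shortComplexH1 A).moduleCatToCycles) ≃ₗ[ℤ] Rcyc p ⧸ I :=
    (Submodule.quotEquivOfEq _ _ hker.symm).trans (φ.quotKerEquivOfSurjective hφsurj)
  -- p ∈ I
  have hpI : (p : Rcyc p) ∈ I := by
    have h1 : (X - C ζ) ∣ cyclotomic p (Rcyc p) :=
      dvd_iff_isRoot.2 (hζ.isRoot_cyclotomic hp.out.pos)
    have h2 := map_dvd (evalRingHom (1 : Rcyc p)) h1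
    simp only [coe_evalRingHom, eval_sub, eval_X, eval_C, eval_one_cyclotomic_prime] at h2
    refine Ideal.mem_span_singleton.2 ?_
    have h3 : ζ - 1 = -(1 - ζ) := by ring
    rw [h3, neg_dvd]
    exact h2
  haveI : Fact (Nat.Prime (((⟨p, hp.out.pos⟩ : ℕ+) : ℕ))) := hp
  haveI : NeZero ((p : ℕ) : ℚ) := ⟨by exact_mod_cast hp.out.ne_zero⟩
  haveI : IsCyclotomicExtension {p} ℚ (Kcyc p) := CyclotomicField.isCyclotomicExtension p ℚ
  haveI : IsCyclotomicExtension {p} ℤ (Rcyc p) :=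
    IsCyclotomicExtension.ringOfIntegers (n := p) (K := Kcyc p)
  -- ζ - 1 is not a unit
  have hKζ : IsPrimitiveRoot (algebraMap (Rcyc p) (Kcyc p) ζ) p :=
    hζ.map_of_injective NumberField.RingOfIntegers.coe_injective
  have hnotunit : ¬ IsUnit (ζ - 1) := by
    have hprime : Prime (hKζ.toInteger - 1) :=
      IsPrimitiveRoot.zeta_sub_one_prime' (p := p) hKζ
    have heq : hKζ.toInteger = ζ := rfl
    rw [heq] at hprime
    exact hprime.not_unit
  have hIne : I ≠ ⊤ := fun h => hnotunit (Ideal.span_singleton_eq_top.1 h)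
  haveI : Nontrivial (Rcyc p ⧸ I) := Ideal.Quotient.nontrivial_iff.mpr hIne
  have hp0 : ((p : ℕ) : Rcyc p ⧸ I) = 0 := by
    have h4 : ((p : ℕ) : Rcyc p ⧸ I) = q (p : Rcyc p) := by simp [q]
    rw [h4]
    exact Ideal.Quotient.eq_zero_iff_mem.2 hpI
  haveI hchar : CharP (Rcyc p ⧸ I) p := by
    have hdvd : ringChar (Rcyc p ⧸ I) ∣ p := ringChar.dvd hp0
    have h5 := (Nat.Prime.eq_one_or_self_of_dvd hp.out _ hdvd).resolve_left CharP.ringChar_ne_one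
    exact ringChar.of_eq h5
  let ψ : ZMod p →+* Rcyc p ⧸ I := ZMod.castHom dvd_rfl (Rcyc p ⧸ I)
  have hψinj : Function.Injective ψ := ψ.injective
  have hψsurj : Function.Surjective ψ := by
    have hadj : Algebra.adjoin ℤ ({ζ} : Set (Rcyc p)) = ⊤ :=
      IsCyclotomicExtension.adjoin_primitive_root_eq_top (n := p) hζ
    intro y
    obtain ⟨x, rfl⟩ := Ideal.Quotient.mk_surjective y
    have hx : x ∈ Algebra.adjoin ℤ ({ζ} : Set (Rcyc p)) := hadj ▸ Algebra.mem_top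
    have key : ∀ (z : Rcyc p), z ∈ Algebra.adjoin ℤ ({ζ} : Set (Rcyc p)) →
        Ideal.Quotient.mk I z ∈ ψ.range := by
      intro z hz
      refine Algebra.adjoin_induction ?_ ?_ ?_ ?_ hz
      · intro w hw
        rcases hw with rfl
        refine ⟨1, ?_⟩
        have h6 : Ideal.Quotient.mk I w - Ideal.Quotient.mk I 1 = 0 := by
          rw [← map_sub]
          exact Ideal.Quotient.eq_zero_iff_mem.2 (Ideal.subset_span (Set.mem_singleton _))
        have h7 : Ideal.Quotient.mk I w = 1 := by
          have := sub_eq_zero.1 h6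
          simpa using this
        simp [h7]
      · intro r
        refine ⟨(r : ZMod p), ?_⟩
        simp only [map_intCast, algebraMap_int_eq, eq_intCast]
      · intro a b _ _ ha hb
        rw [map_add]
        exact add_mem ha hb
      · intro a b _ _ ha hb
        rw [map_mul]
        exact mul_mem ha hb
    exact key x hx
  have equiv2 : ZMod p ≃+* Rcyc p ⧸ I := RingEquiv.ofBijective ψ ⟨hψinj, hψsurj⟩
  have e0 : (groupCohomology A 1 : ModuleCat ℤ) ≃+ (LinearMap.ker (shortComplexH1 A).g.hom ⧸ LinearMap.range (shortComplexH1 A).moduleCatToCycles) :=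
    (H1Iso A).toLinearEquiv.toAddEquiv
  exact ⟨(e0.trans equiv1.toAddEquiv).trans equiv2.symm.toAddEquiv⟩

end Stmt13
end

section
/- Let p be a prime and 1 ≤ m ≤ p−1. Let ℤ/p act on the group ring ℤ[ℤ/p] by left multiplication, and equip the m-th exterior power Λ^m_ℤ(ℤ[ℤ/p]) with the induced ℤ/p-action (each g ∈ ℤ/p acting as the m-th exterior power of the multiplication-by-g map), making Λ^m_ℤ(ℤ[ℤ/p]) a ℤ[ℤ/p]-module. Then Λ^m_ℤ(ℤ[ℤ/p]) is a free ℤ[ℤ/p]-module. -/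
noncomputable section AuxExt

open ExteriorAlgebra

variable {I : Type*} [LinearOrder I]

/-- standard basis wedge of the exterior power of a finsupp module -/
def wedgeAux (m : ℕ) (s : {s : Finset I // s.card = m}) : ⋀[ℤ]^m (I →₀ ℤ) :=
  ⟨ExteriorAlgebra.ιMulti_family ℤ m (fun i => Finsupp.single i 1) s,
    ExteriorAlgebra.ιMulti_range ℤ m ⟨_, rfl⟩⟩

/-- the determinant-of-coordinates alternating form indexed by `s` -/
def coordForm (m : ℕ) (s : {s : Finset I // s.card = m}) :
    ((I →₀ ℤ) [⋀^Fin m]→ₗ[ℤ] ℤ) :=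
  (Matrix.detRowAlternating (R := ℤ) (n := Fin m)).compLinearMap
    ((LinearMap.pi fun i => Finsupp.lapply ((s.1.orderIsoOfFin s.2 i : I))) : (I →₀ ℤ) →ₗ[ℤ] (Fin m → ℤ))

lemma coordForm_wedge (m : ℕ) (s t : {s : Finset I // s.card = m}) :
    coordForm m s (fun j => Finsupp.single ((t.1.orderIsoOfFin t.2 j : I)) (1:ℤ)) =
      if t = s then 1 else 0 := by
  have hM : (fun j => ((LinearMap.pi fun i => Finsupp.lapply ((s.1.orderIsoOfFin s.2 i : I))) : (I →₀ ℤ) →ₗ[ℤ] (Fin m → ℤ))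
      (Finsupp.single ((t.1.orderIsoOfFin t.2 j : I)) (1:ℤ)))
      = fun j i => if (t.1.orderIsoOfFin t.2 j : I) = (s.1.orderIsoOfFin s.2 i : I)
        then (1:ℤ) else 0 := by
    ext j i
    simp [Finsupp.single_apply]
    congr
  show Matrix.det _ = _
  rw [show (fun j => ((LinearMap.pi fun i => Finsupp.lapply ((s.1.orderIsoOfFin s.2 i : I))) : (I →₀ ℤ) →ₗ[ℤ] (Fin m → ℤ))
      ((fun j => Finsupp.single ((t.1.orderIsoOfFin t.2 j : I)) (1:ℤ)) j)) = _ from hM]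
  by_cases h : t = s
  · subst h
    rw [if_pos rfl]
    have h1 : (fun j i => if (t.1.orderIsoOfFin t.2 j : I) = (t.1.orderIsoOfFin t.2 i : I)
        then (1:ℤ) else 0) = (1 : Matrix (Fin m) (Fin m) ℤ) := by
      ext j i
      rw [Matrix.one_apply]
      by_cases hji : j = i
      · simp [hji]
      · rw [if_neg (fun hc => hji ?_), if_neg hji]
        exact (Finset.orderEmbOfFin t.1 t.2).injective (by
          rwa [← Finset.coe_orderIsoOfFin_apply, ← Finset.coe_orderIsoOfFin_apply])
    rw [h1, Matrix.det_one]
  · rw [if_neg h]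
    have hns : ¬ t.1 ⊆ s.1 := fun hsub =>
      h (Subtype.ext (Finset.eq_of_subset_of_card_le hsub (by rw [s.2, t.2])))
    obtain ⟨x, hxt, hxs⟩ := Finset.not_subset.1 hns
    apply Matrix.det_eq_zero_of_row_eq_zero ((t.1.orderIsoOfFin t.2).symm ⟨x, hxt⟩)
    intro i
    have hx : ((t.1.orderIsoOfFin t.2) ((t.1.orderIsoOfFin t.2).symm ⟨x, hxt⟩) : I) = x := by
      rw [OrderIso.apply_symm_apply]
    rw [hx, if_neg]
    intro hc
    exact hxs (hc ▸ (s.1.orderIsoOfFin s.2 i).2)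


/-- linear functional on the exterior algebra detecting the coefficient of `wedgeAux m s` -/
def dualW (m : ℕ) (s : {s : Finset I // s.card = m}) :
    ExteriorAlgebra ℤ (I →₀ ℤ) →ₗ[ℤ] ℤ :=
  ExteriorAlgebra.liftAlternating
    (Function.update (fun n => (0 : (I →₀ ℤ) [⋀^Fin n]→ₗ[ℤ] ℤ)) m (coordForm m s))

lemma dualW_wedge (m : ℕ) (s t : {s : Finset I // s.card = m}) :
    dualW m s (wedgeAux m t).1 = if t = s then 1 else 0 := by
  show ExteriorAlgebra.liftAlternating _ (ExteriorAlgebra.ιMulti ℤ m _) = _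
  rw [ExteriorAlgebra.liftAlternating_apply_ιMulti, Function.update_self]
  exact coordForm_wedge m s t

lemma wedgeAux_linearIndependent (m : ℕ) :
    LinearIndependent ℤ (wedgeAux (I := I) m) := by
  rw [linearIndependent_iff]
  intro l hl
  ext s
  have h2 : (dualW m s) ((⋀[ℤ]^m (I →₀ ℤ)).subtype
      (Finsupp.linearCombination ℤ (wedgeAux (I := I) m) l)) = 0 := by
    rw [hl]; simp
  rw [Finsupp.apply_linearCombination, Finsupp.apply_linearCombination] at h2
  rw [Finsupp.linearCombination_apply, Finsupp.sum] at h2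
  have h3 : ∀ t ∈ l.support,
      l t • (⇑(dualW m s) ∘ ⇑(⋀[ℤ]^m (I →₀ ℤ)).subtype ∘ wedgeAux m) t
        = if t = s then l t else 0 := by
    intro t _
    show l t • (dualW m s) (wedgeAux m t).1 = _
    rw [dualW_wedge, smul_ite, smul_eq_mul, mul_one, smul_zero]
  rw [Finset.sum_congr rfl h3, Finset.sum_ite_eq' l.support s (fun t => l t)] at h2
  by_cases hs : s ∈ l.support
  · rw [if_pos hs] at h2; simpa using h2
  · simpa using ((Finsupp.notMem_support_iff).1 hs)


lemma ιMulti_single_eq (m : ℕ) [DecidableEq I] (r : Fin m → I) (inj : Function.Injective r)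
    (ht : (Finset.image r Finset.univ).card = m) :
    ∃ (ε : ℤˣ),
      ExteriorAlgebra.ιMulti ℤ m (fun j => Finsupp.single (r j) (1:ℤ)) =
        (ε : ℤ) • (wedgeAux m ⟨Finset.image r Finset.univ, ht⟩).1 := by
  set t : Finset I := Finset.image r Finset.univ with htdef
  have hmem : ∀ j, r j ∈ t := fun j => Finset.mem_image.2 ⟨j, Finset.mem_univ j, rfl⟩
  set f' : Fin m → {x // x ∈ t} := fun j => ⟨r j, hmem j⟩ with hf'
  have hbij : Function.Bijective f' := by
    rw [Fintype.bijective_iff_injective_and_card]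
    constructor
    · intro a b h
      exact inj (congrArg Subtype.val h)
    · rw [Fintype.card_coe, ht, Fintype.card_fin]
  set σ : Equiv.Perm (Fin m) :=
    (Equiv.ofBijective f' hbij).trans (t.orderIsoOfFin ht).toEquiv.symm with hσ
  have hkey : ∀ j, ((t.orderIsoOfFin ht) (σ j) : I) = r j := by
    intro j
    have : (t.orderIsoOfFin ht) (σ j) = f' j := by
      simp [hσ, Equiv.ofBijective]
    rw [this]
  have hfam : (fun j => Finsupp.single (r j) (1:ℤ)) =
      (fun j => Finsupp.single ((t.orderIsoOfFin ht j : I)) (1:ℤ)) ∘ σ := by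
    funext j
    simp only [Function.comp_apply, hkey j]
  rw [hfam, AlternatingMap.map_perm]
  refine ⟨Equiv.Perm.sign σ, ?_⟩
  rw [Units.smul_def]
  rfl

lemma mem_span_wedgeAux (m : ℕ) [DecidableEq I] (v : Fin m → (I →₀ ℤ)) :
    ExteriorAlgebra.ιMulti ℤ m v ∈
      Submodule.span ℤ (Set.range (fun s => (wedgeAux (I := I) m s).1)) := by
  have hv : v = fun j => ∑ i ∈ (v j).support, (v j) i • Finsupp.single i (1:ℤ) := by
    funext j
    calc v j = ∑ i ∈ (v j).support, Finsupp.single i ((v j) i) := (Finsupp.sum_single (v j)).symm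
      _ = ∑ i ∈ (v j).support, (v j) i • Finsupp.single i (1:ℤ) := by
          refine Finset.sum_congr rfl fun i _ => ?_
          rw [Finsupp.smul_single, smul_eq_mul, mul_one]
  have hexp : ExteriorAlgebra.ιMulti ℤ m v =
      ∑ r ∈ Fintype.piFinset (fun j => (v j).support),
        ExteriorAlgebra.ιMulti ℤ m (fun j => (v j) (r j) • Finsupp.single (r j) (1:ℤ)) := by
    conv_lhs => rw [hv]
    exact (ExteriorAlgebra.ιMulti ℤ m).toMultilinearMap.map_sum_finset _ _
  rw [hexp]
  apply Submodule.sum_mem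
  intro r _
  have hsm : ExteriorAlgebra.ιMulti ℤ m (fun j => (v j) (r j) • Finsupp.single (r j) (1:ℤ)) =
      (∏ j, (v j) (r j)) • ExteriorAlgebra.ιMulti ℤ m (fun j => Finsupp.single (r j) (1:ℤ)) :=
    (ExteriorAlgebra.ιMulti ℤ m).toMultilinearMap.map_smul_univ _ _
  rw [hsm]
  apply Submodule.smul_mem
  by_cases hinj : Function.Injective r
  · have ht : (Finset.image r Finset.univ).card = m := by
      rw [Finset.card_image_of_injective _ hinj, Finset.card_univ, Fintype.card_fin]
    obtain ⟨ε, hε⟩ := ιMulti_single_eq m r hinj ht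
    rw [hε]
    exact Submodule.smul_mem _ _ (Submodule.subset_span ⟨_, rfl⟩)
  · have hni : ¬ Function.Injective (fun j => Finsupp.single (r j) (1:ℤ)) := fun hc =>
      hinj (fun a b hab => hc (show Finsupp.single (r a) (1:ℤ) = Finsupp.single (r b) 1 by
        rw [hab]))
    rw [AlternatingMap.map_eq_zero_of_not_injective _ _ hni]
    exact Submodule.zero_mem _

lemma wedgeAux_span (m : ℕ) [DecidableEq I] :
    ⊤ ≤ Submodule.span ℤ (Set.range (wedgeAux (I := I) m)) := by
  intro x _
  have hsub : (⋀[ℤ]^m (I →₀ ℤ) : Submodule ℤ _) ≤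
      Submodule.map (⋀[ℤ]^m (I →₀ ℤ)).subtype
        (Submodule.span ℤ (Set.range (wedgeAux (I := I) m))) := by
    have h1 : Submodule.span ℤ (Set.range (ExteriorAlgebra.ιMulti ℤ m (M := I →₀ ℤ))) ≤
        Submodule.map (⋀[ℤ]^m (I →₀ ℤ)).subtype
          (Submodule.span ℤ (Set.range (wedgeAux (I := I) m))) := by
      rw [Submodule.map_span, ← Set.range_comp]
      apply Submodule.span_le.2
      rintro u ⟨w, rfl⟩
      exact mem_span_wedgeAux m w
    exact le_trans (le_of_eq (ExteriorAlgebra.ιMulti_span_fixedDegree ℤ m).symm) h1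
  obtain ⟨y, hy, hval⟩ := hsub x.2
  have hxy : y = x := Subtype.ext hval
  exact hxy ▸ hy

/-- `ℤ`-basis of the exterior power of a finsupp module over a linearly ordered type. -/
def wedgeBasis (m : ℕ) [DecidableEq I] :
    Module.Basis {s : Finset I // s.card = m} ℤ (⋀[ℤ]^m (I →₀ ℤ)) :=
  Module.Basis.mk (wedgeAux_linearIndependent m) (wedgeAux_span m)

@[simp] lemma wedgeBasis_apply (m : ℕ) [DecidableEq I] (s : {s : Finset I // s.card = m}) :
    wedgeBasis m s = wedgeAux m s := Module.Basis.mk_apply _ _ _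

end AuxExt





/-- The `ℤ`-linear map `Λ^n f : Λ^n M → Λ^n N` induced by `f : M → N` by functoriality of
exterior powers (the restriction of `ExteriorAlgebra.map f` to the `n`-th exterior power). -/
noncomputable def extPowerMap {M N : Type*} [AddCommGroup M] [Module ℤ M]
    [AddCommGroup N] [Module ℤ N] (n : ℕ) (f : M →ₗ[ℤ] N) :
    (⋀[ℤ]^n M) →ₗ[ℤ] (⋀[ℤ]^n N) :=
  ((ExteriorAlgebra.map f).toLinearMap).restrict
    (p := ⋀[ℤ]^n M) (q := ⋀[ℤ]^n N) (by
      intro x hx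
      have h : Submodule.map (ExteriorAlgebra.map f).toLinearMap (⋀[ℤ]^n M) ≤ ⋀[ℤ]^n N := by
        rw [Submodule.map_pow, ExteriorAlgebra.ι_range_map_map]
        exact pow_le_pow_left' (Submodule.map_le_iff_le_comap.mpr
          (fun y _ => LinearMap.mem_range_self _ _)) n
      exact h ⟨x, hx, rfl⟩)

/-- The representation of `G` on the `r`-th exterior power `Λ^r M` (taken over `ℤ`) induced by
a representation of `G` on `M`, each `g` acting as the `r`-th exterior power of the action
of `g` on `M`. -/
noncomputable def extRep {G : Type*} [Monoid G] {M : Type*} [AddCommGroup M] [Module ℤ M]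
    (ρ : Representation ℤ G M) (r : ℕ) : Representation ℤ G (⋀[ℤ]^r M) where
  toFun g := extPowerMap r (ρ g)
  map_one' := by
    apply LinearMap.ext; intro x; apply Subtype.ext
    show (ExteriorAlgebra.map (ρ 1)).toLinearMap ↑x = ↑x
    rw [map_one, Module.End.one_eq_id, ExteriorAlgebra.map_id]
    rfl
  map_mul' g h := by
    apply LinearMap.ext; intro x; apply Subtype.ext
    show (ExteriorAlgebra.map (ρ (g * h))).toLinearMap ↑x =
      (ExteriorAlgebra.map (ρ g)).toLinearMap ((ExteriorAlgebra.map (ρ h)).toLinearMap ↑x)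
    rw [map_mul]
    have h1 : ρ g * ρ h = (ρ g) ∘ₗ (ρ h) := rfl
    rw [h1, ← ExteriorAlgebra.map_comp_map]
    rfl

/-- The left-multiplication (regular) representation of `ℤ/p` on the group ring
`ℤ[ℤ/p] = (ℤ/p) →₀ ℤ`. -/
noncomputable def regularRep (p : ℕ) :
    Representation ℤ (Multiplicative (ZMod p)) (Multiplicative (ZMod p) →₀ ℤ) :=
  { toFun := fun g => Finsupp.lmapDomain ℤ ℤ (g • · : Multiplicative (ZMod p) → Multiplicative (ZMod p))
    map_one' := by ext; simp
    map_mul' := fun x y => by ext; simp [mul_assoc] }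

noncomputable section AuxGrp

open ExteriorAlgebra

/-- a linear order on `Multiplicative (ZMod p)` -/
noncomputable instance mzLinearOrder (p : ℕ) [NeZero p] :
    LinearOrder (Multiplicative (ZMod p)) :=
  LinearOrder.lift' (fun x => (Multiplicative.toAdd x).val)
    (fun a b h => ZMod.val_injective p h)

/-- the index type: `m`-element subsets of `ZMod p` -/
abbrev Bset (p m : ℕ) := {s : Finset (Multiplicative (ZMod p)) // s.card = m}

instance bMulAction (p m : ℕ) : MulAction (Multiplicative (ZMod p)) (Bset p m) where
  smul g s := ⟨Finset.image (fun x => g * x) s.1, by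
    rw [Finset.card_image_of_injective _ (mul_right_injective g), s.2]⟩
  one_smul s := Subtype.ext (by
    show Finset.image (fun x => 1 * x) s.1 = s.1
    simp)
  mul_smul g h s := Subtype.ext (by
    show Finset.image (fun x => (g * h) * x) s.1
      = Finset.image (fun x => g * x) (Finset.image (fun x => h * x) s.1)
    rw [Finset.image_image]
    simp [Function.comp, mul_assoc])

lemma Bset_smul_coe (p m : ℕ) (g : Multiplicative (ZMod p)) (s : Bset p m) :
    (g • s).1 = Finset.image (fun x => g * x) s.1 := rfl

lemma image_orderEmb (p m : ℕ) [NeZero p] (s : Bset p m) :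
    Finset.image (fun i => ((s.1.orderIsoOfFin s.2 i : Multiplicative (ZMod p)))) Finset.univ
      = s.1 := by
  ext x
  simp only [Finset.mem_image, Finset.mem_univ, true_and]
  constructor
  · rintro ⟨i, rfl⟩
    exact (s.1.orderIsoOfFin s.2 i).2
  · intro hx
    exact ⟨(s.1.orderIsoOfFin s.2).symm ⟨x, hx⟩, by rw [OrderIso.apply_symm_apply]⟩

lemma extPowerMap_regular_wedge (p m : ℕ) [NeZero p] (g : Multiplicative (ZMod p))
    (s : Bset p m) :
    ∃ ε : ℤˣ, extPowerMap m ((regularRep p) g) (wedgeAux m s)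
      = (ε : ℤ) • wedgeAux m (g • s) := by
  set r : Fin m → Multiplicative (ZMod p) :=
    fun i => g * (s.1.orderIsoOfFin s.2 i : Multiplicative (ZMod p)) with hr
  have hinj : Function.Injective r :=
    fun a b h => (s.1.orderIsoOfFin s.2).injective (Subtype.coe_injective (mul_left_cancel h))
  have himg : Finset.image r Finset.univ = (g • s).1 := by
    rw [Bset_smul_coe]
    rw [show r = (fun x => g * x)
      ∘ (fun i => ((s.1.orderIsoOfFin s.2 i : Multiplicative (ZMod p)))) from rfl]
    rw [← Finset.image_image, image_orderEmb]
  have ht : (Finset.image r Finset.univ).card = m := by rw [himg, (g • s).2]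
  obtain ⟨ε, hε⟩ := ιMulti_single_eq m r hinj ht
  refine ⟨ε, Subtype.ext ?_⟩
  have hco : ((extPowerMap m ((regularRep p) g) (wedgeAux m s)) : ExteriorAlgebra ℤ (Multiplicative (ZMod p) →₀ ℤ))
      = (ExteriorAlgebra.map ((regularRep p) g)) (wedgeAux m s).1 := rfl
  rw [hco]
  show (ExteriorAlgebra.map ((regularRep p) g))
      (ExteriorAlgebra.ιMulti ℤ m fun i =>
        Finsupp.single ((s.1.orderIsoOfFin s.2 i : Multiplicative (ZMod p))) 1)
      = _
  rw [ExteriorAlgebra.map_apply_ιMulti]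
  have hfam : (⇑((regularRep p) g) ∘ fun i =>
      Finsupp.single ((s.1.orderIsoOfFin s.2 i : Multiplicative (ZMod p))) (1:ℤ))
      = fun j => Finsupp.single (r j) (1:ℤ) := by
    funext j
    show (regularRep p) g (Finsupp.single _ 1) = _
    simp [regularRep, Finsupp.mapDomain_single, hr]
  rw [hfam, hε]
  have heq : (wedgeAux m ⟨Finset.image r Finset.univ, ht⟩
      : ⋀[ℤ]^m (Multiplicative (ZMod p) →₀ ℤ))
      = wedgeAux m (g • s) := by
    congr 1
    exact Subtype.ext himg
  rw [heq]
  rfl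

/-- the sign produced by the action of `g` on a wedge -/
noncomputable def wsgn (p m : ℕ) [NeZero p] (g : Multiplicative (ZMod p)) (s : Bset p m) : ℤˣ :=
  (extPowerMap_regular_wedge p m g s).choose

lemma wsgn_spec (p m : ℕ) [NeZero p] (g : Multiplicative (ZMod p)) (s : Bset p m) :
    extPowerMap m ((regularRep p) g) (wedgeAux m s)
      = ((wsgn p m g s : ℤˣ) : ℤ) • wedgeAux m (g • s) :=
  (extPowerMap_regular_wedge p m g s).choose_spec

lemma free_action (p m : ℕ) [Fact p.Prime] (hm1 : 1 ≤ m) (hm2 : m ≤ p - 1)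
    (g : Multiplicative (ZMod p)) (s : Bset p m) (h : g • s = s) : g = 1 := by
  haveI : NeZero p := ⟨(Fact.out : p.Prime).ne_zero⟩
  by_contra hg
  obtain ⟨x₀, hx₀⟩ := Finset.card_pos.1 (show 0 < s.1.card by rw [s.2]; omega)
  have hstep : ∀ y ∈ s.1, g * y ∈ s.1 := by
    intro y hy
    have h2 : g * y ∈ (g • s).1 := Finset.mem_image_of_mem _ hy
    rwa [h] at h2
  have hpow : ∀ n : ℕ, g ^ n * x₀ ∈ s.1 := by
    intro n
    induction n with
    | zero => simpa using hx₀
    | succ n ih =>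
        have h3 := hstep _ ih
        rwa [← mul_assoc, ← pow_succ'] at h3
  set c : ZMod p := Multiplicative.toAdd g with hc
  have hc0 : c ≠ 0 := fun hc0 => hg (by
    have h4 : Multiplicative.ofAdd c = Multiplicative.ofAdd 0 := by rw [hc0]
    simpa [hc] using h4)
  have hinj : Set.InjOn (fun a : ZMod p => g ^ a.val * x₀)
      ((Finset.univ : Finset (ZMod p)) : Set (ZMod p)) := by
    intro a _ b _ hab
    have h1 : g ^ a.val = g ^ b.val := mul_right_cancel hab
    have h2 : (a.val : ZMod p) * c = (b.val : ZMod p) * c := by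
      have h5 := congrArg Multiplicative.toAdd h1
      rwa [toAdd_pow, toAdd_pow, nsmul_eq_mul, nsmul_eq_mul] at h5
    have h3 : (a.val : ZMod p) = (b.val : ZMod p) := mul_right_cancel₀ hc0 h2
    rwa [ZMod.natCast_rightInverse a, ZMod.natCast_rightInverse b] at h3
  have hcard : (Finset.univ : Finset (ZMod p)).card ≤ s.1.card :=
    Finset.card_le_card_of_injOn _ (fun a _ => hpow a.val) hinj
  rw [Finset.card_univ, ZMod.card, s.2] at hcard
  omega

/-- orbit-decomposition bijection -/
noncomputable def orbEquiv (p m : ℕ) [Fact p.Prime] (hm1 : 1 ≤ m) (hm2 : m ≤ p - 1) :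
    (Σ _ : Quotient (MulAction.orbitRel (Multiplicative (ZMod p)) (Bset p m)),
      Multiplicative (ZMod p)) ≃ Bset p m := by
  refine Equiv.ofBijective (fun jg => jg.2 • jg.1.out) ⟨?_, ?_⟩
  · rintro ⟨j, g⟩ ⟨j', g'⟩ hjg
    dsimp at hjg
    have hjj : j = j' := by
      rw [← Quotient.out_eq j, ← Quotient.out_eq j']
      apply Quotient.sound
      exact MulAction.orbitRel_apply.mpr
        (MulAction.mem_orbit_iff.mpr ⟨g⁻¹ * g', by rw [mul_smul, ← hjg, inv_smul_smul]⟩)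
    subst hjj
    have hgg : g = g' := by
      have h1 : (g'⁻¹ * g) • j.out = j.out := by
        rw [mul_smul, hjg, inv_smul_smul]
      have h6 := free_action p m hm1 hm2 _ _ h1
      rwa [inv_mul_eq_one, eq_comm] at h6
    rw [hgg]
  · intro s
    have h7 := Quotient.mk_out (s := MulAction.orbitRel (Multiplicative (ZMod p)) (Bset p m)) s
    obtain ⟨g, hg⟩ := MulAction.mem_orbit_iff.mp (MulAction.orbitRel_apply.mp h7)
    exact ⟨⟨Quotient.mk _ s, g⁻¹⟩, by dsimp; rw [← hg, inv_smul_smul]⟩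

end AuxGrp

/-- for `1 ≤ m ≤ p−1`, the `m`-th exterior power `Λ^m_ℤ(ℤ[ℤ/p])`, viewed as a
`ℤ[ℤ/p]`-module via the action induced by left multiplication, is a free
`ℤ[ℤ/p]`-module. -/



theorem stmt14 (p : ℕ) [Fact p.Prime] (m : ℕ) (hm1 : 1 ≤ m) (hm2 : m ≤ p - 1) :
    Module.Free (MonoidAlgebra ℤ (Multiplicative (ZMod p)))
      (extRep (regularRep p) m).asModule := by
  haveI : NeZero p := ⟨(Fact.out : p.Prime).ne_zero⟩
  set ρ' := extRep (regularRep p) m with hρ'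
  set eqR : (Multiplicative (ZMod p) →₀ ℤ) ≃+ MonoidAlgebra ℤ (Multiplicative (ZMod p)) :=
    MonoidAlgebra.coeffAddEquiv.symm with heqR
  set bR : Module.Basis (Multiplicative (ZMod p)) ℤ (MonoidAlgebra ℤ (Multiplicative (ZMod p))) :=
    Finsupp.basisSingleOne.map eqR.toIntLinearEquiv with hbRdef
  set J := Quotient (MulAction.orbitRel (Multiplicative (ZMod p)) (Bset p m)) with hJ
  set b1 : Module.Basis (Σ _ : J, Multiplicative (ZMod p)) ℤ
      (J →₀ MonoidAlgebra ℤ (Multiplicative (ZMod p))) :=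
    Finsupp.basis (fun _ => bR) with hb1def
  set eqN := ρ'.asModuleEquiv.toIntLinearEquiv with heqN
  set b2 : Module.Basis (Bset p m) ℤ ρ'.asModule := (wedgeBasis m).map eqN.symm with hb2def
  set e := orbEquiv p m hm1 hm2 with he
  set b3 := (b2.reindex e.symm).unitsSMul (fun jg => wsgn p m jg.2 jg.1.out) with hb3def
  set Φ : (J →₀ MonoidAlgebra ℤ (Multiplicative (ZMod p))) →ₗ[MonoidAlgebra ℤ
      (Multiplicative (ZMod p))] ρ'.asModule :=
    Finsupp.linearCombination (MonoidAlgebra ℤ (Multiplicative (ZMod p)))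
      (fun j => b2 j.out) with hΦ
  have hbR : ∀ g, bR g = MonoidAlgebra.single g (1:ℤ) := by
    intro g
    rw [hbRdef, Module.Basis.map_apply]
    rfl
  have hb1 : ∀ (j : J) (g : Multiplicative (ZMod p)),
      b1 ⟨j, g⟩ = Finsupp.single j (bR g) := by
    intro j g
    apply b1.repr.injective
    rw [Module.Basis.repr_self]
    ext ⟨j', g'⟩
    rw [hb1def, Finsupp.basis_repr]
    rcases eq_or_ne j' j with rfl | hj
    · rw [Finsupp.single_eq_same, Module.Basis.repr_self]
      rcases eq_or_ne g' g with rfl | hg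
      · simp
      · simp [Finsupp.single_apply, hg, Ne.symm hg]
    · rw [Finsupp.single_eq_of_ne hj]
      simp [Finsupp.single_apply, hj, Ne.symm hj]
  have hb2 : ∀ s : Bset p m, eqN (b2 s) = (wedgeAux m s : ⋀[ℤ]^m (Multiplicative (ZMod p) →₀ ℤ)) := by
    intro s
    rw [hb2def, Module.Basis.map_apply, LinearEquiv.apply_symm_apply, wedgeBasis_apply]
  have key : ∀ jg : Σ _ : J, Multiplicative (ZMod p), Φ (b1 jg) = b3 jg := by
    rintro ⟨j, g⟩
    rw [hb1 j g, hΦ, Finsupp.linearCombination_single]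
    have hb3 : b3 ⟨j, g⟩ = ((wsgn p m g j.out : ℤˣ) : ℤ) • b2 (g • j.out) := by
      rw [hb3def, Module.Basis.unitsSMul_apply, Module.Basis.reindex_apply, Equiv.symm_symm, Units.smul_def]
      congr 1
    rw [hb3]
    apply eqN.injective
    have hsm : eqN ((bR g) • b2 j.out)
        = ρ' g (eqN (b2 j.out)) := by
      rw [hbR g]
      have h1 := Representation.asModuleEquiv_map_smul ρ'
        (MonoidAlgebra.single g (1:ℤ) : MonoidAlgebra ℤ (Multiplicative (ZMod p))) (b2 j.out)
      have h2 : (ρ'.asAlgebraHom) (MonoidAlgebra.single g (1:ℤ)) = ρ' g :=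
        Representation.asAlgebraHom_single_one ρ' g
      rw [h2] at h1
      exact h1
    rw [hsm, hb2]
    have hact : ρ' g = extPowerMap m ((regularRep p) g) := rfl
    rw [hact, wsgn_spec p m g j.out, map_smul, hb2]
  have hΦeq : (Φ.toAddMonoidHom.toIntLinearMap)
      = (b1.equiv b3 (Equiv.refl _)).toLinearMap := by
    apply b1.ext
    intro jg
    show Φ (b1 jg) = (b1.equiv b3 (Equiv.refl _)) (b1 jg)
    rw [Module.Basis.equiv_apply, Equiv.refl_apply, key jg]
  have hbij : Function.Bijective Φ := by
    have hco : ⇑Φ = ⇑(b1.equiv b3 (Equiv.refl _)) :=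
      funext fun x => LinearMap.congr_fun hΦeq x
    rw [show ⇑Φ = ⇑(b1.equiv b3 (Equiv.refl _)) from hco]
    exact (b1.equiv b3 (Equiv.refl _)).bijective
  exact Module.Free.of_equiv (LinearEquiv.ofBijective Φ hbij)
end
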